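/- Let A₁, A₂, A₃ ∈ ℝ with A₁ + A₂ + A₃ = 0, let d₂, d₃, σ₂, σ₃ > 0, set E₂ = σ₂²/(2d₂) and E₃ = σ₃²/(2d₃), assume A₂E₃ + A₃E₂ ≠ 0, and set E₁ = −A₁E₂E₃/(A₂E₃ + A₃E₂) with E₁ > 0. Then the Gaussian function p(u₁,u₂,u₃) = exp( −½( u₁²/E₁ + u₂²/E₂ + u₃²/E₃ ) ) satisfies the stationary Fokker–Planck equation of the triad system at every point of ℝ³: ∂_{u₁}( A₁u₂u₃ · p ) + ∂_{u₂}( (A₂u₃u₁ − d₂u₂) · p ) + ∂_{u₃}( (A₃u₁u₂ − d₃u₃) · p ) = (σ₂²/2) ∂²_{u₂} p + (σ₃²/2) ∂²_{u₃} p. -/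

import Mathlib

private lemma quadA (E b c : ℝ) (t : ℝ) :
    HasDerivAt (fun s : ℝ => s ^ 2 / E + b + c) (2 * t / E) t := by
  have h := (((hasDerivAt_pow 2 t).div_const E).add_const b).add_const c
  exact h.congr_deriv (by ring)

private lemma quadB (a E c : ℝ) (t : ℝ) :
    HasDerivAt (fun s : ℝ => a + s ^ 2 / E + c) (2 * t / E) t := by
  have h := (((hasDerivAt_pow 2 t).div_const E).const_add a).add_const c
  exact h.congr_deriv (by ring)

private lemma quadC (a b E : ℝ) (t : ℝ) :
    HasDerivAt (fun s : ℝ => a + b + s ^ 2 / E) (2 * t / E) t := by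
  have h := ((hasDerivAt_pow 2 t).div_const E).const_add (a + b)
  exact h.congr_deriv (by ring)

private lemma gexp {q : ℝ → ℝ} {q' : ℝ} {t : ℝ} (h : HasDerivAt q q' t) :
    HasDerivAt (fun s => Real.exp (-(1 / 2) * q s))
      (Real.exp (-(1 / 2) * q t) * (-(1 / 2) * q')) t :=
  (h.const_mul (-(1 / 2) : ℝ)).exp

/-- **The triad model has a Gaussian invariant measure.**
With `A₁ + A₂ + A₃ = 0`, `E₂ = σ₂²/(2d₂)`, `E₃ = σ₃²/(2d₃)` and
`E₁ = −A₁E₂E₃/(A₂E₃ + A₃E₂) > 0`, the Gaussian function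
`p = exp(−½(u₁²/E₁ + u₂²/E₂ + u₃²/E₃))` solves the stationary Fokker–Planck equation of the
triad system at every point. -/
theorem triad_gaussian_invariant_measure
    (A1 A2 A3 d2 d3 σ2 σ3 E1 E2 E3 : ℝ)
    (hsum : A1 + A2 + A3 = 0)
    (hd2 : 0 < d2) (hd3 : 0 < d3) (hσ2 : 0 < σ2) (hσ3 : 0 < σ3)
    (hE2 : E2 = σ2 ^ 2 / (2 * d2)) (hE3 : E3 = σ3 ^ 2 / (2 * d3))
    (hden : A2 * E3 + A3 * E2 ≠ 0)
    (hE1 : E1 = -A1 * E2 * E3 / (A2 * E3 + A3 * E2)) (hE1pos : 0 < E1)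
    (p : ℝ → ℝ → ℝ → ℝ)
    (hp : ∀ u1 u2 u3, p u1 u2 u3 =
      Real.exp (-(1 / 2) * (u1 ^ 2 / E1 + u2 ^ 2 / E2 + u3 ^ 2 / E3))) :
    ∀ u1 u2 u3 : ℝ,
      deriv (fun t => A1 * u2 * u3 * p t u2 u3) u1
      + deriv (fun t => (A2 * u3 * u1 - d2 * t) * p u1 t u3) u2
      + deriv (fun t => (A3 * u1 * u2 - d3 * t) * p u1 u2 t) u3
      = σ2 ^ 2 / 2 * iteratedDeriv 2 (fun t => p u1 t u3) u2
      + σ3 ^ 2 / 2 * iteratedDeriv 2 (fun t => p u1 u2 t) u3 := by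
  have hE1ne : E1 ≠ 0 := ne_of_gt hE1pos
  have hE2ne : E2 ≠ 0 := by
    rw [hE2]; positivity
  have hE3ne : E3 ≠ 0 := by
    rw [hE3]; positivity
  have key : E1 * (A2 * E3 + A3 * E2) = -A1 * E2 * E3 := by
    rw [hE1, div_mul_cancel₀ _ hden]
  have hs2 : σ2 ^ 2 = 2 * d2 * E2 := by
    rw [hE2]; field_simp
  have hs3 : σ3 ^ 2 = 2 * d3 * E3 := by
    rw [hE3]; field_simp
  intro u1 u2 u3
  simp only [hp]
  -- derivative in u1
  have h1 :
      deriv (fun t => A1 * u2 * u3 *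
          Real.exp (-(1 / 2) * (t ^ 2 / E1 + u2 ^ 2 / E2 + u3 ^ 2 / E3))) u1
        = A1 * u2 * u3 *
          (Real.exp (-(1 / 2) * (u1 ^ 2 / E1 + u2 ^ 2 / E2 + u3 ^ 2 / E3))
            * (-(1 / 2) * (2 * u1 / E1))) :=
    ((gexp (quadA E1 (u2 ^ 2 / E2) (u3 ^ 2 / E3) u1)).const_mul (A1 * u2 * u3)).deriv
  -- derivative in u2
  have hlin2 : HasDerivAt (fun t : ℝ => A2 * u3 * u1 - d2 * t) (-(d2 * 1)) u2 :=
    ((hasDerivAt_id' u2).const_mul d2).const_sub (A2 * u3 * u1)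
  have h2 :
      deriv (fun t => (A2 * u3 * u1 - d2 * t) *
          Real.exp (-(1 / 2) * (u1 ^ 2 / E1 + t ^ 2 / E2 + u3 ^ 2 / E3))) u2
        = -(d2 * 1) * Real.exp (-(1 / 2) * (u1 ^ 2 / E1 + u2 ^ 2 / E2 + u3 ^ 2 / E3))
          + (A2 * u3 * u1 - d2 * u2) *
            (Real.exp (-(1 / 2) * (u1 ^ 2 / E1 + u2 ^ 2 / E2 + u3 ^ 2 / E3))
              * (-(1 / 2) * (2 * u2 / E2))) :=
    (hlin2.mul (gexp (quadB (u1 ^ 2 / E1) E2 (u3 ^ 2 / E3) u2))).deriv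
  -- derivative in u3
  have hlin3 : HasDerivAt (fun t : ℝ => A3 * u1 * u2 - d3 * t) (-(d3 * 1)) u3 :=
    ((hasDerivAt_id' u3).const_mul d3).const_sub (A3 * u1 * u2)
  have h3 :
      deriv (fun t => (A3 * u1 * u2 - d3 * t) *
          Real.exp (-(1 / 2) * (u1 ^ 2 / E1 + u2 ^ 2 / E2 + t ^ 2 / E3))) u3
        = -(d3 * 1) * Real.exp (-(1 / 2) * (u1 ^ 2 / E1 + u2 ^ 2 / E2 + u3 ^ 2 / E3))
          + (A3 * u1 * u2 - d3 * u3) *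
            (Real.exp (-(1 / 2) * (u1 ^ 2 / E1 + u2 ^ 2 / E2 + u3 ^ 2 / E3))
              * (-(1 / 2) * (2 * u3 / E3))) :=
    (hlin3.mul (gexp (quadC (u1 ^ 2 / E1) (u2 ^ 2 / E2) E3 u3))).deriv
  -- second derivative in u2
  have hd2fun :
      deriv (fun t => Real.exp (-(1 / 2) * (u1 ^ 2 / E1 + t ^ 2 / E2 + u3 ^ 2 / E3)))
        = fun t => Real.exp (-(1 / 2) * (u1 ^ 2 / E1 + t ^ 2 / E2 + u3 ^ 2 / E3))
            * (-(1 / 2) * (2 * t / E2)) :=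
    funext fun t => (gexp (quadB (u1 ^ 2 / E1) E2 (u3 ^ 2 / E3) t)).deriv
  have hmul2 : HasDerivAt (fun t : ℝ => -(1 / 2) * (2 * t / E2)) (-(1 / 2) * (2 * 1 / E2)) u2 :=
    (((hasDerivAt_id' u2).const_mul 2).div_const E2).const_mul (-(1 / 2) : ℝ)
  have hit2 :
      iteratedDeriv 2
        (fun t => Real.exp (-(1 / 2) * (u1 ^ 2 / E1 + t ^ 2 / E2 + u3 ^ 2 / E3))) u2
        = (Real.exp (-(1 / 2) * (u1 ^ 2 / E1 + u2 ^ 2 / E2 + u3 ^ 2 / E3))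
            * (-(1 / 2) * (2 * u2 / E2))) * (-(1 / 2) * (2 * u2 / E2))
          + Real.exp (-(1 / 2) * (u1 ^ 2 / E1 + u2 ^ 2 / E2 + u3 ^ 2 / E3))
            * (-(1 / 2) * (2 * 1 / E2)) := by
    rw [show (2 : ℕ) = 1 + 1 from rfl, iteratedDeriv_succ, iteratedDeriv_one, hd2fun]
    exact ((gexp (quadB (u1 ^ 2 / E1) E2 (u3 ^ 2 / E3) u2)).mul hmul2).deriv
  -- second derivative in u3
  have hd3fun :
      deriv (fun t => Real.exp (-(1 / 2) * (u1 ^ 2 / E1 + u2 ^ 2 / E2 + t ^ 2 / E3)))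
        = fun t => Real.exp (-(1 / 2) * (u1 ^ 2 / E1 + u2 ^ 2 / E2 + t ^ 2 / E3))
            * (-(1 / 2) * (2 * t / E3)) :=
    funext fun t => (gexp (quadC (u1 ^ 2 / E1) (u2 ^ 2 / E2) E3 t)).deriv
  have hmul3 : HasDerivAt (fun t : ℝ => -(1 / 2) * (2 * t / E3)) (-(1 / 2) * (2 * 1 / E3)) u3 :=
    (((hasDerivAt_id' u3).const_mul 2).div_const E3).const_mul (-(1 / 2) : ℝ)
  have hit3 :
      iteratedDeriv 2
        (fun t => Real.exp (-(1 / 2) * (u1 ^ 2 / E1 + u2 ^ 2 / E2 + t ^ 2 / E3))) u3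
        = (Real.exp (-(1 / 2) * (u1 ^ 2 / E1 + u2 ^ 2 / E2 + u3 ^ 2 / E3))
            * (-(1 / 2) * (2 * u3 / E3))) * (-(1 / 2) * (2 * u3 / E3))
          + Real.exp (-(1 / 2) * (u1 ^ 2 / E1 + u2 ^ 2 / E2 + u3 ^ 2 / E3))
            * (-(1 / 2) * (2 * 1 / E3)) := by
    rw [show (2 : ℕ) = 1 + 1 from rfl, iteratedDeriv_succ, iteratedDeriv_one, hd3fun]
    exact ((gexp (quadC (u1 ^ 2 / E1) (u2 ^ 2 / E2) E3 u3)).mul hmul3).deriv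
  rw [h1, h2, h3, hit2, hit3]
  set K := Real.exp (-(1 / 2) * (u1 ^ 2 / E1 + u2 ^ 2 / E2 + u3 ^ 2 / E3)) with hK
  rw [hs2, hs3]
  field_simp
  ring_nf
  linear_combination (-(u1 * u2 * u3 * K)) * key
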